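/- Let P ⊆ ℝⁿ be a Delone set of finite local complexity. There exists ε with 0 < ε < 1 such that the following holds: if φ, ψ : ℝⁿ → ℝⁿ are differentiable functions whose derivative maps dφ and dψ are strongly P-equivariant, if sup_{x ∈ ℝⁿ} ‖Dφ(x) − I‖ < ε, and if φ − ψ is strongly P-equivariant, then φ is a bijection of ℝⁿ, the function (ψ − φ) ∘ φ⁻¹ is strongly φ(P)-equivariant, and ψ(P) is locally derivable from φ(P). -/

import Mathlib

open Metric Set

set_option maxHeartbeats 1000000
set_option synthInstance.maxHeartbeats 200000

noncomputable section

/-- Euclidean space ℝⁿ. -/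
abbrev Euc (n : ℕ) := EuclideanSpace ℝ (Fin n)

/-- The translate `P - x = {p - x : p ∈ P}`. -/
def shiftSet {n : ℕ} (P : Set (Euc n)) (x : Euc n) : Set (Euc n) :=
  (fun p => p - x) '' P

/-- The `r`-patch of `P` around `x`: `B_r[P - x] = B(0,r) ∩ (P - x)`. -/
def patch {n : ℕ} (P : Set (Euc n)) (r : ℝ) (x : Euc n) : Set (Euc n) :=
  ball (0 : Euc n) r ∩ shiftSet P x

/-- `P` is uniformly discrete: there is a positive minimal distance between points. -/
def UnifDiscrete {n : ℕ} (P : Set (Euc n)) : Prop :=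
  ∃ δ > 0, ∀ p ∈ P, ∀ q ∈ P, p ≠ q → δ ≤ ‖p - q‖

/-- `P` is relatively dense: every ball of radius `R` contains a point of `P`. -/
def RelDense {n : ℕ} (P : Set (Euc n)) : Prop :=
  ∃ R > 0, ∀ x : Euc n, ∃ p ∈ P, ‖p - x‖ < R

/-- `P` has finite local complexity: for each `r > 0`, only finitely many `r`-patches
around points of `P`. -/
def FLC {n : ℕ} (P : Set (Euc n)) : Prop :=
  ∀ r > 0, {s : Set (Euc n) | ∃ x ∈ P, s = patch P r x}.Finite

/-- `f` is `P`-equivariant with range `R`. -/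
def EquivRange {n : ℕ} {F : Type*} (P : Set (Euc n)) (R : ℝ) (f : Euc n → F) : Prop :=
  ∀ x y : Euc n, patch P R x = patch P R y → f x = f y

/-- `f` is strongly `P`-equivariant: `P`-equivariant with some finite range `R > 0`. -/
def StrongEquiv {n : ℕ} {F : Type*} (P : Set (Euc n)) (f : Euc n → F) : Prop :=
  ∃ R > 0, EquivRange P R f

/-- `f`, viewed as a function on the subset `Q`, is `P`-equivariant with range `R`. -/
def EquivRangeOn {n : ℕ} {F : Type*} (P Q : Set (Euc n)) (R : ℝ) (f : Euc n → F) : Prop :=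
  ∀ x ∈ Q, ∀ y ∈ Q, patch P R x = patch P R y → f x = f y

/-- `f`, viewed as a function on the subset `Q`, is strongly `P`-equivariant. -/
def StrongEquivOn {n : ℕ} {F : Type*} (P Q : Set (Euc n)) (f : Euc n → F) : Prop :=
  ∃ R > 0, EquivRangeOn P Q R f

/-- `Q` is locally derivable from `P`. -/
def LocallyDerivable {n : ℕ} (P Q : Set (Euc n)) : Prop :=
  ∃ R > 0, ∀ x y : Euc n, patch P R x = patch P R y →
    ({0} : Set (Euc n)) ∩ shiftSet Q x = ({0} : Set (Euc n)) ∩ shiftSet Q y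

/-- Hypothesis (H): for every `r > 0` there is `r' > 0` such that for all `x`,
`B(φ(x), r) ∩ φ(P) ⊆ φ(B(x, r') ∩ P)`. -/
def HypoH {n : ℕ} (P : Set (Euc n)) (φ : Euc n → Euc n) : Prop :=
  ∀ r > 0, ∃ r' > 0, ∀ x : Euc n, ball (φ x) r ∩ (φ '' P) ⊆ φ '' (ball x r' ∩ P)

/-- The pattern metric `D` on closed subsets of ℝⁿ. -/
def patternDist {n : ℕ} (A B : Set (Euc n)) : ℝ :=
  sInf {ε : ℝ | 0 < ε ∧ Metric.hausdorffDist
    ((ball (0 : Euc n) (1 / ε) ∩ A) ∪ sphere (0 : Euc n) (1 / ε))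
    ((ball (0 : Euc n) (1 / ε) ∩ B) ∪ sphere (0 : Euc n) (1 / ε)) ≤ ε}

/-- A continuous `f : ℝⁿ → ℝⁿ` is weakly `P`-equivariant if it is uniformly approximated
by strongly `P`-equivariant continuous functions. -/
def WeakEquiv {n : ℕ} (P : Set (Euc n)) (f : Euc n → Euc n) : Prop :=
  ∀ ε > 0, ∃ g : Euc n → Euc n, Continuous g ∧ StrongEquiv P g ∧ ∀ x : Euc n, ‖f x - g x‖ < ε

/-- `P` is aperiodic: the only translation fixing `P` is `0`. -/
def IsAperiodicSet {n : ℕ} (P : Set (Euc n)) : Prop :=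
  ∀ x : Euc n, shiftSet P x = P → x = 0


lemma mem_shiftSet {n : ℕ} {P : Set (Euc n)} {x z : Euc n} :
    z ∈ shiftSet P x ↔ z + x ∈ P := by
  constructor
  · rintro ⟨p, hp, rfl⟩; simpa using hp
  · intro h; exact ⟨z + x, h, by simp⟩

lemma mem_patch {n : ℕ} {P : Set (Euc n)} {R : ℝ} {x z : Euc n} :
    z ∈ patch P R x ↔ ‖z‖ < R ∧ z + x ∈ P := by
  simp [patch, mem_shiftSet, mem_ball_zero_iff]

lemma patch_mono {n : ℕ} {P : Set (Euc n)} {R R' : ℝ} {x y : Euc n}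
    (hR : R' ≤ R) (h : patch P R x = patch P R y) : patch P R' x = patch P R' y := by
  ext z
  simp only [mem_patch]
  constructor
  · rintro ⟨h1, h2⟩
    have := (mem_patch.mp (h ▸ mem_patch.mpr ⟨lt_of_lt_of_le h1 hR, h2⟩)).2
    exact ⟨h1, this⟩
  · rintro ⟨h1, h2⟩
    have := (mem_patch.mp (h ▸ mem_patch.mpr ⟨lt_of_lt_of_le h1 hR, h2⟩)).2
    exact ⟨h1, this⟩

lemma patch_translate {n : ℕ} {P : Set (Euc n)} {R R' : ℝ} {x y w : Euc n}
    (h : patch P R x = patch P R y) (hw : ‖w‖ + R' ≤ R) :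
    patch P R' (x + w) = patch P R' (y + w) := by
  have key : ∀ z : Euc n, ‖z‖ < R' → ((z + (x + w) ∈ P) ↔ (z + (y + w) ∈ P)) := by
    intro z hz
    have hzw : ‖z + w‖ < R := by
      calc ‖z + w‖ ≤ ‖z‖ + ‖w‖ := norm_add_le _ _
        _ < R' + ‖w‖ := by linarith
        _ ≤ R := by linarith
    have h1 : (z + w) + x ∈ P ↔ (z + w) + y ∈ P := by
      constructor
      · intro hm; exact (mem_patch.mp (h ▸ mem_patch.mpr ⟨hzw, hm⟩)).2
      · intro hm; exact (mem_patch.mp (h.symm ▸ mem_patch.mpr ⟨hzw, hm⟩)).2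
    have e1 : (z + w) + x = z + (x + w) := by abel
    have e2 : (z + w) + y = z + (y + w) := by abel
    rw [e1, e2] at h1; exact h1
  ext z
  simp only [mem_patch]
  exact ⟨fun ⟨h1, h2⟩ => ⟨h1, (key z h1).1 h2⟩, fun ⟨h1, h2⟩ => ⟨h1, (key z h1).2 h2⟩⟩

/-- Claim A: equivariant derivative implies displacement equivariance. -/
lemma claimA {n : ℕ} {P : Set (Euc n)} {f : Euc n → Euc n} {R r : ℝ}
    (hf : Differentiable ℝ f) (hEq : EquivRange P R (fderiv ℝ f))
    {x y : Euc n} (hp : patch P (R + r) x = patch P (R + r) y)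
    {z : Euc n} (hz : ‖z‖ ≤ r) :
    f (x + z) - f x = f (y + z) - f y := by
  set g : Euc n → Euc n := fun w => f (x + w) - f (y + w) with hg
  have hder : ∀ w ∈ closedBall (0 : Euc n) r,
      HasFDerivWithinAt g (0 : Euc n →L[ℝ] Euc n) (closedBall (0 : Euc n) r) w := by
    intro w hw
    have hwn : ‖w‖ ≤ r := by simpa [mem_closedBall, dist_zero_right] using hw
    have hpw : patch P R (x + w) = patch P R (y + w) :=
      patch_translate hp (by linarith)
    have hDeq : fderiv ℝ f (x + w) = fderiv ℝ f (y + w) := hEq _ _ hpw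
    have h1 : HasFDerivAt (fun w => f (x + w)) (fderiv ℝ f (x + w)) w := by
      have := (hf (x + w)).hasFDerivAt.comp w ((hasFDerivAt_id w).const_add x)
      simpa [Function.comp_def] using this
    have h2 : HasFDerivAt (fun w => f (y + w)) (fderiv ℝ f (y + w)) w := by
      have := (hf (y + w)).hasFDerivAt.comp w ((hasFDerivAt_id w).const_add y)
      simpa [Function.comp_def] using this
    have := h1.sub h2
    rw [hDeq] at this
    rw [sub_self] at this
    exact this.hasFDerivWithinAt
  have hr0 : (0 : ℝ) ≤ r := le_trans (norm_nonneg z) hz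
  have := (convex_closedBall (0 : Euc n) r).norm_image_sub_le_of_norm_hasFDerivWithin_le (C := 0)
    hder (fun w _ => by simp) (mem_closedBall_self hr0)
    (by simpa [mem_closedBall, dist_zero_right] using hz)
  have h0 : g z - g 0 = 0 := by
    have : ‖g z - g 0‖ ≤ 0 := by simpa using this
    simpa [sub_eq_zero] using norm_le_zero_iff.mp this
  have : g z = g 0 := sub_eq_zero.mp h0
  simp only [hg, add_zero] at this
  exact sub_eq_sub_iff_sub_eq_sub.mp this

/-- Mean value: if ‖Df - I‖ ≤ ε everywhere then f - id is ε-Lipschitz. -/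
lemma key1_lemma {n : ℕ} {f : Euc n → Euc n} {ε : ℝ}
    (hf : Differentiable ℝ f)
    (hD : ∀ x : Euc n, ‖fderiv ℝ f x - ContinuousLinearMap.id ℝ (Euc n)‖ ≤ ε) :
    ∀ a b : Euc n, ‖f a - f b - (a - b)‖ ≤ ε * ‖a - b‖ := by
  intro a b
  set g : Euc n → Euc n := fun x => f x - x with hg
  have hder : ∀ x : Euc n, HasFDerivAt g
      (fderiv ℝ f x - ContinuousLinearMap.id ℝ (Euc n)) x := by
    intro x
    exact (hf x).hasFDerivAt.sub (hasFDerivAt_id x)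
  have := (convex_univ (𝕜 := ℝ) (E := Euc n)).norm_image_sub_le_of_norm_hasFDerivWithin_le
    (f' := fun x => fderiv ℝ f x - ContinuousLinearMap.id ℝ (Euc n))
    (fun x _ => (hder x).hasFDerivWithinAt) (fun x _ => hD x) (mem_univ b) (mem_univ a)
  have e : g a - g b = f a - f b - (a - b) := by simp [hg]; abel
  rwa [e] at this

lemma bijective_of_close_to_id {n : ℕ} {f : Euc n → Euc n} {ε : ℝ}
    (hε : 0 < ε) (hε1 : ε < 1)
    (key1 : ∀ a b : Euc n, ‖f a - f b - (a - b)‖ ≤ ε * ‖a - b‖) :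
    Function.Bijective f := by
  constructor
  · intro a b hab
    by_contra hne
    have h1 : ‖b - a‖ ≤ ε * ‖a - b‖ := by
      have := key1 a b
      rw [hab] at this
      simpa using this
    have h2 : 0 < ‖a - b‖ := by
      rw [norm_pos_iff, sub_ne_zero]; exact hne
    have h3 : ‖b - a‖ = ‖a - b‖ := norm_sub_rev b a
    nlinarith
  · intro w
    set T : Euc n → Euc n := fun x => w - (f x - x) with hT
    have hlip : LipschitzWith ε.toNNReal T := by
      apply LipschitzWith.of_dist_le_mul
      intro a b
      rw [dist_eq_norm, dist_eq_norm]
      have : T a - T b = -(f a - f b - (a - b)) := by simp [hT]; abel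
      rw [this, norm_neg]
      calc ‖f a - f b - (a - b)‖ ≤ ε * ‖a - b‖ := key1 a b
        _ = ε.toNNReal * ‖a - b‖ := by rw [Real.coe_toNNReal _ hε.le]
    have hcontr : ContractingWith ε.toNNReal T := by
      refine ⟨?_, hlip⟩
      rw [← Real.toNNReal_one]
      exact (Real.toNNReal_lt_toNNReal_iff one_pos).mpr hε1
    have hfix := hcontr.fixedPoint_isFixedPt
    set x := hcontr.fixedPoint T with hx
    refine ⟨x, ?_⟩
    have h : w - (f x - x) = x := hfix
    have h2 : w = x + (f x - x) := sub_eq_iff_eq_add.mp h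
    rw [h2]; abel

/-- A δ-separated subset of a ball is finite. -/
lemma finite_of_separated {n : ℕ} {s : Set (Euc n)} {r δ : ℝ} (hδ : 0 < δ)
    (hs : s ⊆ ball (0 : Euc n) r)
    (hsep : ∀ p ∈ s, ∀ q ∈ s, p ≠ q → δ ≤ ‖p - q‖) : s.Finite := by
  have htb : TotallyBounded s :=
    (isCompact_closedBall (0 : Euc n) r).totallyBounded.subset
      (hs.trans ball_subset_closedBall)
  obtain ⟨t, htf, hcov⟩ := (totallyBounded_iff.mp htb) (δ / 2) (by linarith)
  have : s = ⋃ y ∈ t, s ∩ ball y (δ / 2) := by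
    ext z
    simp only [mem_iUnion, mem_inter_iff]
    constructor
    · intro hz
      obtain ⟨y, hy, hzy⟩ := by simpa [mem_iUnion] using hcov hz
      exact ⟨y, hy, hz, hzy⟩
    · rintro ⟨y, hy, hz, _⟩; exact hz
  rw [this]
  apply Set.Finite.biUnion htf
  intro y _
  apply Set.Subsingleton.finite
  intro p hp q hq
  by_contra hne
  have h1 : ‖p - q‖ ≤ dist p y + dist q y := by
    rw [dist_eq_norm, dist_eq_norm]
    have e : p - q = (p - y) - (q - y) := by abel
    rw [e]; exact norm_sub_le _ _
  have h2 := hsep p hp.1 q hq.1 hne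
  have h3 : dist p y < δ / 2 := by simpa [mem_ball] using hp.2
  have h4 : dist q y < δ / 2 := by simpa [mem_ball] using hq.2
  linarith

/-- Each patch of a uniformly discrete set is finite. -/
lemma patch_finite {n : ℕ} {P : Set (Euc n)} (hUD : UnifDiscrete P) {r : ℝ} (x : Euc n) :
    (patch P r x).Finite := by
  obtain ⟨δ, hδ, hsep⟩ := hUD
  have hsub : patch P r x ⊆ ball (0 : Euc n) r := fun z hz =>
    mem_ball_zero_iff.mpr (mem_patch.mp hz).1
  apply finite_of_separated hδ hsub
  intro p hp q hq hne
  have hp' := (mem_patch.mp hp).2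
  have hq' := (mem_patch.mp hq).2
  have e : p - q = (p + x) - (q + x) := by abel
  rw [e]
  refine hsep _ hp' _ hq' ?_
  intro h
  exact hne (add_right_cancel h)

/-- The set of difference vectors of `P` within a ball is finite. -/
lemma diffset_finite {n : ℕ} {P : Set (Euc n)} (hUD : UnifDiscrete P) (hFLC : FLC P)
    {r : ℝ} (hr : 0 < r) :
    {d : Euc n | ‖d‖ < r ∧ ∃ p ∈ P, d + p ∈ P}.Finite := by
  have hcover : {d : Euc n | ‖d‖ < r ∧ ∃ p ∈ P, d + p ∈ P} =
      ⋃₀ {s : Set (Euc n) | ∃ x ∈ P, s = patch P r x} := by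
    ext d
    simp only [mem_setOf_eq, mem_sUnion]
    constructor
    · rintro ⟨hd, p, hp, hdp⟩
      exact ⟨patch P r p, ⟨p, hp, rfl⟩, mem_patch.mpr ⟨hd, hdp⟩⟩
    · rintro ⟨s, ⟨x, hx, rfl⟩, hd⟩
      obtain ⟨h1, h2⟩ := mem_patch.mp hd
      exact ⟨h1, x, hx, h2⟩
  rw [hcover]
  exact Set.Finite.sUnion (hFLC r hr) (by rintro s ⟨x, _, rfl⟩; exact patch_finite hUD x)

/-- A finite set has a positive separation constant. -/
lemma exists_gap {n : ℕ} {T : Set (Euc n)} (hT : T.Finite) :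
    ∃ γ : ℝ, 0 < γ ∧ ∀ s ∈ T, ∀ t ∈ T, ‖s - t‖ < γ → s = t := by
  have hV : ((fun p : Euc n × Euc n => ‖p.1 - p.2‖) ''
      ((T ×ˢ T) ∩ {p | p.1 ≠ p.2})).Finite :=
    ((hT.prod hT).inter_of_left _).image _
  by_cases hne : ((fun p : Euc n × Euc n => ‖p.1 - p.2‖) ''
      ((T ×ˢ T) ∩ {p | p.1 ≠ p.2})).Nonempty
  · set V := (fun p : Euc n × Euc n => ‖p.1 - p.2‖) '' ((T ×ˢ T) ∩ {p | p.1 ≠ p.2}) with hVdef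
    obtain ⟨m, hmV, hmin⟩ : ∃ m ∈ V, ∀ a' ∈ V, id a' ≤ id m → id m = id a' := by
      obtain ⟨m, hmV, hmin⟩ := Set.Finite.exists_minimalFor id V hV hne
      exact ⟨m, hmV, fun a' ha h => le_antisymm (hmin ha h) h⟩
    obtain ⟨⟨s, t⟩, ⟨⟨hs, ht⟩, hst⟩, hm⟩ := hmV
    have hmpos : 0 < m := by
      rw [← hm]
      exact norm_pos_iff.mpr (sub_ne_zero.mpr hst)
    refine ⟨m, hmpos, ?_⟩
    intro s' hs' t' ht' hlt
    by_contra hne'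
    have : ‖s' - t'‖ ∈ V := ⟨(s', t'), ⟨⟨hs', ht'⟩, hne'⟩, rfl⟩
    have := hmin _ this (le_of_lt hlt)
    simp only [id] at this
    linarith
  · refine ⟨1, one_pos, ?_⟩
    intro s hs t ht _
    by_contra hne'
    exact hne ⟨‖s - t‖, ⟨(s, t), ⟨⟨hs, ht⟩, hne'⟩, rfl⟩⟩

/-- A strongly equivariant function on an FLC set is bounded on the set. -/
lemma bounded_on_P {n : ℕ} {P : Set (Euc n)} (hFLC : FLC P)
    {f : Euc n → Euc n} {R : ℝ} (hR : 0 < R) (hEq : EquivRange P R f) :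
    ∃ K : ℝ, 0 ≤ K ∧ ∀ p ∈ P, ‖f p‖ ≤ K := by
  classical
  set val : Set (Euc n) → Euc n := fun s =>
    if h : ∃ p ∈ P, s = patch P R p then f h.choose else 0 with hval
  have hfin : (val '' {s : Set (Euc n) | ∃ x ∈ P, s = patch P R x}).Finite :=
    (hFLC R hR).image _
  have hmem : ∀ p ∈ P, f p ∈ val '' {s : Set (Euc n) | ∃ x ∈ P, s = patch P R x} := by
    intro p hp
    refine ⟨patch P R p, ⟨p, hp, rfl⟩, ?_⟩
    have h : ∃ q ∈ P, patch P R p = patch P R q := ⟨p, hp, rfl⟩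
    rw [hval]
    simp only [dif_pos h]
    obtain ⟨hq, heq⟩ := h.choose_spec
    exact hEq _ _ heq.symm
  obtain ⟨C, hC⟩ := (Bornology.IsBounded.exists_norm_le (hfin.isBounded))
  exact ⟨max C 0, le_max_right _ _, fun p hp =>
    le_trans (hC _ (hmem p hp)) (le_max_left _ _)⟩

section Core

variable {n : ℕ} {P : Set (Euc n)} {φ : Euc n → Euc n} {ε γ Rd R₁ M : ℝ}

/-- Abstract chain lemma. -/
lemma chain_lemma {n : ℕ} {P : Set (Euc n)} {φ : Euc n → Euc n} {ε γ Rd M : ℝ}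
    (hdense : ∀ x : Euc n, ∃ p ∈ P, ‖p - x‖ < Rd) (hRd : 0 < Rd)
    (hgap : ∀ s ∈ {d : Euc n | ‖d‖ < 10*Rd + 10 ∧ ∃ p ∈ P, d + p ∈ P},
      ∀ t ∈ {d : Euc n | ‖d‖ < 10*Rd + 10 ∧ ∃ p ∈ P, d + p ∈ P}, ‖s - t‖ < γ → s = t)
    (hε0 : 0 < ε) (hε2 : ε ≤ 1/2) (hεγ : ε * (200*(Rd+1)) ≤ γ)
    (key1 : ∀ x y : Euc n, ‖φ x - φ y - (x - y)‖ ≤ ε * ‖x - y‖)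
    (hMpos : 20*Rd + 20 ≤ M)
    {x₀ u v : Euc n} {Qf : Euc n → Euc n}
    (hQf : ∀ p, p ∈ P → ‖p - x₀‖ < M + Rd → Qf p ∈ P ∧ φ (Qf p) - v = φ p - u) :
    ∀ p p', p ∈ P → p' ∈ P → ‖p - x₀‖ < M → ‖p' - x₀‖ < M →
      Qf p - p = Qf p' - p' := by
  classical
  have upper : ∀ x y : Euc n, ‖φ x - φ y‖ ≤ 2 * ‖x - y‖ := by
    intro x y
    have h := key1 x y
    have h2 : ‖φ x - φ y‖ - ‖x - y‖ ≤ ‖φ x - φ y - (x - y)‖ := norm_sub_norm_le _ _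
    nlinarith [norm_nonneg (x - y)]
  have lower : ∀ x y : Euc n, ‖x - y‖ ≤ 2 * ‖φ x - φ y‖ := by
    intro x y
    have h := key1 x y
    have h2 : ‖x - y‖ - ‖φ x - φ y‖ ≤ ‖φ x - φ y - (x - y)‖ := by
      rw [norm_sub_rev (φ x - φ y) (x - y)]
      exact norm_sub_norm_le _ _
    nlinarith [norm_nonneg (x - y)]
  have STEP : ∀ p₁ p₂, p₁ ∈ P → p₂ ∈ P → ‖p₁ - x₀‖ < M + Rd → ‖p₂ - x₀‖ < M + Rd →
      ‖p₁ - p₂‖ ≤ 2*Rd + 1 → Qf p₁ - p₁ = Qf p₂ - p₂ := by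
    intro p₁ p₂ hp₁ hp₂ ha₁ ha₂ hd
    obtain ⟨hq₁P, hq₁e⟩ := hQf p₁ hp₁ ha₁
    obtain ⟨hq₂P, hq₂e⟩ := hQf p₂ hp₂ ha₂
    have hφeq : φ (Qf p₁) - φ (Qf p₂) = φ p₁ - φ p₂ := by
      have : (φ (Qf p₁) - v) - (φ (Qf p₂) - v) = (φ p₁ - u) - (φ p₂ - u) := by
        rw [hq₁e, hq₂e]
      have e1 : (φ (Qf p₁) - v) - (φ (Qf p₂) - v) = φ (Qf p₁) - φ (Qf p₂) := by abel
      have e2 : (φ p₁ - u) - (φ p₂ - u) = φ p₁ - φ p₂ := by abel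
      rw [e1, e2] at this; exact this
    have hq12 : ‖Qf p₁ - Qf p₂‖ ≤ 8*Rd + 4 := by
      have h1 := lower (Qf p₁) (Qf p₂)
      have h2 : ‖φ (Qf p₁) - φ (Qf p₂)‖ ≤ 2 * ‖p₁ - p₂‖ := by rw [hφeq]; exact upper _ _
      linarith
    have hx₁ : (p₁ - p₂) ∈ {d : Euc n | ‖d‖ < 10*Rd + 10 ∧ ∃ p ∈ P, d + p ∈ P} := by
      refine ⟨by linarith, p₂, hp₂, ?_⟩
      rw [sub_add_cancel]; exact hp₁
    have hx₂ : (Qf p₁ - Qf p₂) ∈ {d : Euc n | ‖d‖ < 10*Rd + 10 ∧ ∃ p ∈ P, d + p ∈ P} := by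
      refine ⟨by linarith, Qf p₂, hq₂P, ?_⟩
      rw [sub_add_cancel]; exact hq₁P
    have hdiff : ‖(p₁ - p₂) - (Qf p₁ - Qf p₂)‖ < γ := by
      have e : (p₁ - p₂) - (Qf p₁ - Qf p₂) =
          ((φ (Qf p₁) - φ (Qf p₂)) - (Qf p₁ - Qf p₂)) - ((φ p₁ - φ p₂) - (p₁ - p₂)) := by
        rw [hφeq]; abel
      rw [e]
      have h1 : ‖(φ (Qf p₁) - φ (Qf p₂)) - (Qf p₁ - Qf p₂)‖ ≤ ε * ‖Qf p₁ - Qf p₂‖ := key1 _ _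
      have h2 : ‖(φ p₁ - φ p₂) - (p₁ - p₂)‖ ≤ ε * ‖p₁ - p₂‖ := key1 _ _
      have h3 := norm_sub_le ((φ (Qf p₁) - φ (Qf p₂)) - (Qf p₁ - Qf p₂))
        ((φ p₁ - φ p₂) - (p₁ - p₂))
      have h4 : ε * ‖Qf p₁ - Qf p₂‖ + ε * ‖p₁ - p₂‖ ≤ ε * (10*Rd + 5) := by nlinarith
      have h5 : ε * (10*Rd + 5) < ε * (200*(Rd+1)) := by nlinarith
      linarith
    have := hgap _ hx₁ _ hx₂ hdiff
    -- p₁ - p₂ = Qf p₁ - Qf p₂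
    have : Qf p₁ - p₁ = Qf p₂ - p₂ := by
      have e : Qf p₁ - p₁ - (Qf p₂ - p₂) = (Qf p₁ - Qf p₂) - (p₁ - p₂) := by abel
      rw [← sub_eq_zero, e, ← this, sub_self]
    exact this
  -- the chain lemma
  have CHAIN : ∀ p p', p ∈ P → p' ∈ P → ‖p - x₀‖ < M → ‖p' - x₀‖ < M →
      Qf p - p = Qf p' - p' := by
    intro p p' hp hp' hpa hpa'
    set N : ℕ := ⌈‖p - p'‖⌉₊ + 1 with hNdef
    have hN0 : (0 : ℝ) < N := by positivity
    have hNr : ‖p - p'‖ ≤ (N : ℝ) := by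
      refine le_trans (Nat.le_ceil _) ?_
      exact_mod_cast Nat.le_succ _
    have hnear : ∀ x : Euc n, ∃ q, q ∈ P ∧ ‖q - x‖ < Rd := by
      intro x; obtain ⟨q, hq1, hq2⟩ := hdense x; exact ⟨q, hq1, hq2⟩
    set nr : Euc n → Euc n := fun x => (hnear x).choose with hnrdef
    have hnr : ∀ x, nr x ∈ P ∧ ‖nr x - x‖ < Rd := fun x => (hnear x).choose_spec
    set seg : ℕ → Euc n := fun i => p' + ((((min i N : ℕ) : ℝ)) / N) • (p - p') with hsegdef
    set c : ℕ → Euc n := fun i => if i = 0 then p' else if N ≤ i then p else nr (seg i)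
      with hcdef
    have hseg0 : seg 0 = p' := by simp [hsegdef]
    have hsegN : ∀ i, N ≤ i → seg i = p := by
      intro i hi
      have : (((min i N : ℕ)) : ℝ) = (N : ℝ) := by
        rw [min_eq_right hi]
      simp only [hsegdef, this]
      rw [div_self (ne_of_gt hN0), one_smul]
      abel
    have hcP : ∀ i, c i ∈ P := by
      intro i
      simp only [hcdef]
      split
      · exact hp'
      · split
        · exact hp
        · exact (hnr _).1
    have hcseg : ∀ i, ‖c i - seg i‖ < Rd := by
      intro i
      simp only [hcdef]
      split
      · rename_i h; subst h; rw [hseg0]; simpa using hRd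
      · split
        · rename_i h1 h2; rw [hsegN i h2]; simpa using hRd
        · exact (hnr _).2
    have hsega : ∀ i, ‖seg i - x₀‖ < M := by
      intro i
      set s : ℝ := (((min i N : ℕ)) : ℝ) / N with hs
      have hs0 : 0 ≤ s := by positivity
      have hs1 : s ≤ 1 := by
        rw [hs, div_le_one hN0]
        exact_mod_cast (min_le_right i N)
      have e : seg i - x₀ = (1 - s) • (p' - x₀) + s • (p - x₀) := by
        simp only [hsegdef, ← hs]
        module
      rw [e]
      have h1 : ‖(1 - s) • (p' - x₀) + s • (p - x₀)‖ ≤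
          (1 - s) * ‖p' - x₀‖ + s * ‖p - x₀‖ := by
        refine le_trans (norm_add_le _ _) ?_
        rw [norm_smul, norm_smul, Real.norm_of_nonneg (by linarith), Real.norm_of_nonneg hs0]
      nlinarith [mul_nonneg (by linarith : (0:ℝ) ≤ 1 - s) (by linarith [hpa'] : (0:ℝ) ≤ M - ‖p' - x₀‖),
        mul_nonneg hs0 (by linarith [hpa] : (0:ℝ) ≤ M - ‖p - x₀‖)]
    have hsegstep : ∀ i, ‖seg (i+1) - seg i‖ ≤ 1 := by
      intro i
      by_cases hi : N ≤ i
      · rw [hsegN i hi, hsegN (i+1) (le_trans hi (Nat.le_succ _)), sub_self]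
        simp
      · push_neg at hi
        have h1 : min i N = i := min_eq_left (le_of_lt hi)
        have h2 : min (i+1) N = i + 1 := min_eq_left hi
        have e : seg (i+1) - seg i = ((1:ℝ) / N) • (p - p') := by
          simp only [hsegdef, h1, h2]
          match_scalars
          push_cast
          ring
          push_cast
          ring
        rw [e, norm_smul, Real.norm_of_nonneg (by positivity)]
        rw [div_mul_eq_mul_div, one_mul, div_le_one hN0]
        exact hNr
    have hca : ∀ i, ‖c i - x₀‖ < M + Rd := by
      intro i
      have e : c i - x₀ = (c i - seg i) + (seg i - x₀) := by abel
      calc ‖c i - x₀‖ = ‖(c i - seg i) + (seg i - x₀)‖ := by rw [e]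
        _ ≤ ‖c i - seg i‖ + ‖seg i - x₀‖ := norm_add_le _ _
        _ < Rd + M := by have := hcseg i; have := hsega i; linarith
        _ = M + Rd := by ring
    have hcstep : ∀ i, ‖c (i+1) - c i‖ ≤ 2*Rd + 1 := by
      intro i
      have e : c (i+1) - c i = (c (i+1) - seg (i+1)) + (seg (i+1) - seg i) +
          (seg i - c i) := by abel
      calc ‖c (i+1) - c i‖ = ‖(c (i+1) - seg (i+1)) + (seg (i+1) - seg i) + (seg i - c i)‖ :=
            by rw [e]
        _ ≤ ‖(c (i+1) - seg (i+1)) + (seg (i+1) - seg i)‖ + ‖seg i - c i‖ := norm_add_le _ _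
        _ ≤ ‖c (i+1) - seg (i+1)‖ + ‖seg (i+1) - seg i‖ + ‖seg i - c i‖ := by
            have := norm_add_le (c (i+1) - seg (i+1)) (seg (i+1) - seg i); linarith
        _ ≤ 2*Rd + 1 := by
            have h1 := hcseg (i+1)
            have h2 := hsegstep i
            have h3 : ‖seg i - c i‖ < Rd := by rw [norm_sub_rev]; exact hcseg i
            linarith
    have IND : ∀ i, Qf (c i) - c i = Qf (c 0) - c 0 := by
      intro i
      induction i with
      | zero => rfl
      | succ i ih =>
        rw [← ih]
        exact STEP (c (i+1)) (c i) (hcP _) (hcP _) (hca _) (hca _) (hcstep i)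
    have hc0 : c 0 = p' := by simp [hcdef]
    have hcN : c N = p := by
      simp only [hcdef]
      rw [if_neg (by omega), if_pos (le_refl N)]
    have := IND N
    rw [hc0, hcN] at this
    exact this
  exact CHAIN
lemma core_lemma
    (hdense : ∀ x : Euc n, ∃ p ∈ P, ‖p - x‖ < Rd) (hRd : 0 < Rd)
    (hgap : ∀ s ∈ {d : Euc n | ‖d‖ < 10*Rd + 10 ∧ ∃ p ∈ P, d + p ∈ P},
      ∀ t ∈ {d : Euc n | ‖d‖ < 10*Rd + 10 ∧ ∃ p ∈ P, d + p ∈ P}, ‖s - t‖ < γ → s = t)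
    (hε0 : 0 < ε) (hε2 : ε ≤ 1/2) (hεγ : ε * (200*(Rd+1)) ≤ γ)
    (key1 : ∀ a b : Euc n, ‖φ a - φ b - (a - b)‖ ≤ ε * ‖a - b‖)
    (hφinj : Function.Injective φ)
    (hφd : Differentiable ℝ φ) (hEq₁ : EquivRange P R₁ (fderiv ℝ φ)) (hR₁ : 0 < R₁)
    (hM : R₁ + 20*Rd + 20 ≤ M)
    (a b : Euc n)
    (hpatch : patch (φ '' P) (4*M) (φ a) = patch (φ '' P) (4*M) (φ b)) :
    patch P (M - 8*Rd - 8) a = patch P (M - 8*Rd - 8) b := by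
  classical
  have hMpos : 20*Rd + 20 ≤ M := by linarith
  -- upper and lower Lipschitz bounds
  have upper : ∀ x y : Euc n, ‖φ x - φ y‖ ≤ 2 * ‖x - y‖ := by
    intro x y
    have h := key1 x y
    have h2 : ‖φ x - φ y‖ - ‖x - y‖ ≤ ‖φ x - φ y - (x - y)‖ := norm_sub_norm_le _ _
    nlinarith [norm_nonneg (x - y)]
  have lower : ∀ x y : Euc n, ‖x - y‖ ≤ 2 * ‖φ x - φ y‖ := by
    intro x y
    have h := key1 x y
    have h2 : ‖x - y‖ - ‖φ x - φ y‖ ≤ ‖φ x - φ y - (x - y)‖ := by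
      rw [norm_sub_rev (φ x - φ y) (x - y)]
      exact norm_sub_norm_le _ _
    nlinarith [norm_nonneg (x - y)]
  -- the partner maps
  have hQex : ∀ (u v : Euc n), patch (φ '' P) (4*M) (φ u) = patch (φ '' P) (4*M) (φ v) →
      ∀ p, p ∈ P → ‖p - u‖ < M + Rd → ∃ q, q ∈ P ∧ φ q - φ v = φ p - φ u := by
    intro u v hpa p hp hpu
    have hnorm : ‖φ p - φ u‖ < 4*M := by
      have := upper p u
      nlinarith
    have h1 : φ p - φ u ∈ patch (φ '' P) (4*M) (φ u) := by
      rw [mem_patch]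
      refine ⟨hnorm, ?_⟩
      rw [sub_add_cancel]
      exact ⟨p, hp, rfl⟩
    rw [hpa] at h1
    obtain ⟨-, q, hq, hqe⟩ := mem_patch.mp h1
    exact ⟨q, hq, by rw [hqe]; abel⟩
  set Q : Euc n → Euc n := fun p =>
    if h : ∃ q, q ∈ P ∧ φ q - φ b = φ p - φ a then h.choose else 0 with hQdef
  set Q' : Euc n → Euc n := fun p =>
    if h : ∃ q, q ∈ P ∧ φ q - φ a = φ p - φ b then h.choose else 0 with hQ'def
  have hQspec : ∀ p, p ∈ P → ‖p - a‖ < M + Rd → Q p ∈ P ∧ φ (Q p) - φ b = φ p - φ a := by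
    intro p hp hpa
    have h := hQex a b hpatch p hp hpa
    rw [hQdef]
    simp only [dif_pos h]
    exact h.choose_spec
  have hQ'spec : ∀ p, p ∈ P → ‖p - b‖ < M + Rd → Q' p ∈ P ∧ φ (Q' p) - φ a = φ p - φ b := by
    intro p hp hpb
    have h := hQex b a hpatch.symm p hp hpb
    rw [hQ'def]
    simp only [dif_pos h]
    exact h.choose_spec
  have CHAIN : ∀ p p', p ∈ P → p' ∈ P → ‖p - a‖ < M → ‖p' - a‖ < M →
      Q p - p = Q p' - p' :=
    chain_lemma hdense hRd hgap hε0 hε2 hεγ key1 (by linarith) hQspec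
  have CHAIN' : ∀ p p', p ∈ P → p' ∈ P → ‖p - b‖ < M → ‖p' - b‖ < M →
      Q' p - p = Q' p' - p' :=
    chain_lemma hdense hRd hgap hε0 hε2 hεγ key1 (by linarith) hQ'spec
  -- anchor point
  obtain ⟨ps, hpsP, hps⟩ := hdense a
  set cv : Euc n := Q ps - ps with hcv
  have hpsM : ‖ps - a‖ < M := by linarith
  have hQconst : ∀ p, p ∈ P → ‖p - a‖ < M → Q p = p + cv := by
    intro p hp hpa
    have := CHAIN p ps hp hpsP hpa hpsM
    rw [hcv, ← this]
    abel
  obtain ⟨hQpsP, hQpse⟩ := hQspec ps hpsP (by linarith)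
  have hQpsb : ‖Q ps - b‖ ≤ 4*Rd := by
    have h1 := lower (Q ps) b
    have h2 : ‖φ (Q ps) - φ b‖ ≤ 2 * ‖ps - a‖ := by
      have e : φ (Q ps) - φ b = φ ps - φ a := hQpse
      rw [e]; exact upper _ _
    linarith
  -- the reverse map is translation by -cv
  have hQ'Qps : Q' (Q ps) = ps := by
    obtain ⟨_, he⟩ := hQ'spec (Q ps) hQpsP (by linarith)
    apply hφinj
    have h : φ (Q' (Q ps)) - φ a = φ ps - φ a := by rw [he, hQpse]
    have := congrArg (fun z => z + φ a) h
    simpa using this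
  have hQ'const : ∀ q, q ∈ P → ‖q - b‖ < M → Q' q = q - cv := by
    intro q hq hqb
    have h1 := CHAIN' q (Q ps) hq hQpsP hqb (by linarith)
    rw [hQ'Qps] at h1
    have h2 : Q' q - q = -cv := by rw [h1, hcv]; abel
    have h3 := sub_eq_iff_eq_add.mp h2
    rw [h3]; abel
  -- distance between a + cv and b
  have hacb : ‖a + cv - b‖ ≤ 5*Rd := by
    have e : a + cv - b = (Q ps - b) - (ps - a) := by rw [hcv]; abel
    rw [e]
    refine le_trans (norm_sub_le _ _) ?_
    have h := le_of_lt hps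
    linarith
  set Rb : ℝ := M - 8*Rd - 8 with hRb
  have hRbM : Rb + 8*Rd + 8 = M := by rw [hRb]; ring
  -- local periodicity
  have per : patch P Rb a = patch P Rb (a + cv) := by
    ext z
    simp only [mem_patch]
    constructor
    · rintro ⟨hz, hzP⟩
      refine ⟨hz, ?_⟩
      have hza : ‖(z + a) - a‖ < M := by
        rw [add_sub_cancel_right]
        linarith
      have hmem := hQconst (z + a) hzP hza
      have hQP := (hQspec (z + a) hzP (by linarith)).1
      have e : z + (a + cv) = Q (z + a) := by rw [hmem]; abel
      rw [e]
      exact hQP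
    · rintro ⟨hz, hzP⟩
      refine ⟨hz, ?_⟩
      have hqb : ‖(z + (a + cv)) - b‖ < M := by
        have e : (z + (a + cv)) - b = z + (a + cv - b) := by abel
        rw [e]
        refine lt_of_le_of_lt (norm_add_le _ _) ?_
        linarith
      have hmem := hQ'const (z + (a + cv)) hzP hqb
      have hQ'P := (hQ'spec (z + (a + cv)) hzP (by linarith)).1
      have e : z + a = Q' (z + (a + cv)) := by rw [hmem]; abel
      rw [e]
      exact hQ'P
  -- b = a + cv
  have hpa₁ : patch P (R₁ + Rd) a = patch P (R₁ + Rd) (a + cv) :=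
    patch_mono (by rw [hRb]; linarith) per
  have hA := claimA hφd hEq₁ hpa₁ (z := ps - a) (le_of_lt hps)
  have e1 : a + (ps - a) = ps := by abel
  have e2 : (a + cv) + (ps - a) = ps + cv := by abel
  rw [e1, e2] at hA
  have e3 : ps + cv = Q ps := by rw [hcv]; abel
  rw [e3] at hA
  have e4 : φ (Q ps) = (φ ps - φ a) + φ b := sub_eq_iff_eq_add.mp hQpse
  rw [e4] at hA
  have e5 : φ (a + cv) = φ b := by
    have h1 : (φ ps - φ a + φ b - φ (a + cv)) - (φ ps - φ a) = φ b - φ (a + cv) := by abel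
    rw [← hA, sub_self] at h1
    exact (sub_eq_zero.mp h1.symm).symm
  have hb : b = a + cv := (hφinj e5).symm
  rw [← hb] at per
  exact per

end Core

theorem stmt19 {n : ℕ} (P : Set (Euc n))
    (hUD : UnifDiscrete P) (hRD : RelDense P) (hFLC : FLC P) :
    ∃ ε : ℝ, 0 < ε ∧ ε < 1 ∧
      ∀ φ ψ : Euc n → Euc n, Differentiable ℝ φ → Differentiable ℝ ψ →
      StrongEquiv P (fderiv ℝ φ) → StrongEquiv P (fderiv ℝ ψ) →
      (∀ x : Euc n, ‖fderiv ℝ φ x - ContinuousLinearMap.id ℝ (Euc n)‖ < ε) →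
      StrongEquiv P (fun x => φ x - ψ x) →
      Function.Bijective φ ∧
        StrongEquiv (φ '' P)
          (fun u => ψ (Function.invFun φ u) - φ (Function.invFun φ u)) ∧
        LocallyDerivable (φ '' P) (ψ '' P) := by
  classical
  obtain ⟨Rd, hRd, hdense⟩ := hRD
  have hT : {d : Euc n | ‖d‖ < 10*Rd + 10 ∧ ∃ p ∈ P, d + p ∈ P}.Finite :=
    diffset_finite hUD hFLC (by linarith)
  obtain ⟨γ, hγ, hgap⟩ := exists_gap hT
  set ε : ℝ := min (1/2) (γ / (200*(Rd+1))) with hεdef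
  have hε0 : 0 < ε := lt_min (by norm_num) (by positivity)
  have hε2 : ε ≤ 1/2 := min_le_left _ _
  have hε1 : ε < 1 := lt_of_le_of_lt hε2 (by norm_num)
  have hεγ : ε * (200*(Rd+1)) ≤ γ := by
    have h1 : ε ≤ γ / (200*(Rd+1)) := min_le_right _ _
    have h2 : (0:ℝ) < 200*(Rd+1) := by linarith
    calc ε * (200*(Rd+1)) ≤ (γ / (200*(Rd+1))) * (200*(Rd+1)) := by nlinarith
      _ = γ := by field_simp
  refine ⟨ε, hε0, hε1, ?_⟩
  intro φ ψ hφd hψd hφD hψD hφI hφψS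
  obtain ⟨R₁, hR₁, hEq₁⟩ := hφD
  obtain ⟨R₂, hR₂, hEq₂⟩ := hψD
  obtain ⟨R₃, hR₃, hEq₃⟩ := hφψS
  have key1 : ∀ a b : Euc n, ‖φ a - φ b - (a - b)‖ ≤ ε * ‖a - b‖ :=
    key1_lemma hφd (fun x => (hφI x).le)
  have hbij : Function.Bijective φ := bijective_of_close_to_id hε0 hε1 key1
  have hinv : ∀ u, φ (Function.invFun φ u) = u := fun u =>
    Function.rightInverse_invFun hbij.2 u
  have lower : ∀ x y : Euc n, ‖x - y‖ ≤ 2 * ‖φ x - φ y‖ := by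
    intro x y
    have h := key1 x y
    have h2 : ‖x - y‖ - ‖φ x - φ y‖ ≤ ‖φ x - φ y - (x - y)‖ := by
      rw [norm_sub_rev (φ x - φ y) (x - y)]
      exact norm_sub_norm_le _ _
    nlinarith [norm_nonneg (x - y)]
  obtain ⟨K, hK0, hKb⟩ := bounded_on_P hFLC hR₃ hEq₃
  set M : ℝ := R₁ + R₂ + R₃ + 2*K + 20*Rd + 20 with hMdef
  have hMc : R₁ + 20*Rd + 20 ≤ M := by rw [hMdef]; linarith
  set S : ℝ := 4*M with hSdef
  have hSpos : 0 < S := by rw [hSdef]; linarith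
  have CORE : ∀ a b : Euc n, patch (φ '' P) S (φ a) = patch (φ '' P) S (φ b) →
      patch P (M - 8*Rd - 8) a = patch P (M - 8*Rd - 8) b := fun a b h =>
    core_lemma hdense hRd hgap hε0 hε2 hεγ key1 hbij.1 hφd hEq₁ hR₁ hMc a b h
  have TR : ∀ x y : Euc n, patch (φ '' P) S x = patch (φ '' P) S y →
      x ∈ ψ '' P → y ∈ ψ '' P := by
    intro x y hxy hx
    obtain ⟨p, hp, hpx⟩ := hx
    set a := Function.invFun φ x with hadef
    set b := Function.invFun φ y with hbdef
    have ha : φ a = x := hinv x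
    have hb : φ b = y := hinv y
    have h := CORE a b (by rw [ha, hb]; exact hxy)
    have hpa : ‖p - a‖ ≤ 2*K := by
      have h1 := lower p a
      rw [ha, ← hpx] at h1
      have h2 := hKb p hp
      have h3 : ‖φ p - ψ p‖ ≤ K := by
        have e : φ p - ψ p = (fun x => φ x - ψ x) p := rfl
        rw [e]; exact h2
      linarith
    have hpc : p + (b - a) ∈ P := by
      have hm : p - a ∈ patch P (M - 8*Rd - 8) a := by
        rw [mem_patch]
        constructor
        · rw [hMdef]; linarith
        · rw [sub_add_cancel]; exact hp
      rw [h] at hm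
      have h4 := (mem_patch.mp hm).2
      have e : p - a + b = p + (b - a) := by abel
      rwa [e] at h4
    have hA := claimA hψd hEq₂
      (patch_mono (show R₂ + (2*K+1) ≤ M - 8*Rd - 8 by rw [hMdef]; linarith) h)
      (z := p - a) (by linarith)
    have e1 : a + (p - a) = p := by abel
    have e2 : b + (p - a) = p + (b - a) := by abel
    rw [e1, e2] at hA
    have hfeq : φ a - ψ a = φ b - ψ b := by
      have := hEq₃ a b (patch_mono (show R₃ ≤ M - 8*Rd - 8 by rw [hMdef]; linarith) h)
      simpa using this
    have e3 : ψ b - ψ a = φ b - φ a := by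
      have h5 : (φ a - ψ a) - (φ b - ψ b) = 0 := by rw [hfeq, sub_self]
      have h6 : ψ b - ψ a - (φ b - φ a) = (φ a - ψ a) - (φ b - ψ b) := by abel
      rw [h5] at h6
      exact sub_eq_zero.mp h6
    refine ⟨p + (b - a), hpc, ?_⟩
    have h7 : ψ (p + (b - a)) = (ψ p - ψ a) + ψ b := sub_eq_iff_eq_add.mp hA.symm
    rw [h7, hpx]
    have e4 : ψ b - ψ a = y - x := by rw [e3, ha, hb]
    have e5 : x - ψ a + ψ b = x + (ψ b - ψ a) := by abel
    rw [e5, e4]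
    abel
  refine ⟨hbij, ⟨S, hSpos, ?_⟩, ⟨S, hSpos, ?_⟩⟩
  · intro u v huv
    have ha : φ (Function.invFun φ u) = u := hinv u
    have hb : φ (Function.invFun φ v) = v := hinv v
    have h := CORE (Function.invFun φ u) (Function.invFun φ v) (by rw [ha, hb]; exact huv)
    have h3 := hEq₃ _ _ (patch_mono (show R₃ ≤ M - 8*Rd - 8 by rw [hMdef]; linarith) h)
    simp only at h3 ⊢
    have h5 : (φ (Function.invFun φ u) - ψ (Function.invFun φ u)) -
        (φ (Function.invFun φ v) - ψ (Function.invFun φ v)) = 0 := by rw [h3, sub_self]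
    have h6 : (ψ (Function.invFun φ u) - φ (Function.invFun φ u)) -
        (ψ (Function.invFun φ v) - φ (Function.invFun φ v)) =
        -((φ (Function.invFun φ u) - ψ (Function.invFun φ u)) -
        (φ (Function.invFun φ v) - ψ (Function.invFun φ v))) := by abel
    rw [h5, neg_zero] at h6
    exact sub_eq_zero.mp h6
  · intro x y hxy
    ext z
    simp only [mem_inter_iff, mem_singleton_iff, mem_shiftSet]
    constructor
    · rintro ⟨rfl, hz⟩
      rw [zero_add] at hz
      exact ⟨rfl, by rw [zero_add]; exact TR x y hxy hz⟩
    · rintro ⟨rfl, hz⟩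
      rw [zero_add] at hz
      exact ⟨rfl, by rw [zero_add]; exact TR y x hxy.symm hz⟩
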